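/- Let 𝒬 be a nonempty family of probability measures on (Ω̄, B(Ω̄)) such that Q({ω̄ : ω̄(0) = 0}) = 1 for every Q ∈ 𝒬 and there is a constant C with sup_{Q∈𝒬} ∫ |ω̄(t) − ω̄(s)|⁴ dQ ≤ C·|t − s|² for all s, t ≥ 0. Then there exists a map B̃ : [0,∞) × Ω̄ → ℝ^d such that: (i) for every ω̄ ∈ Ω̄ the path t ↦ B̃(t, ω̄) is continuous and B̃(0, ω̄) = 0; (ii) for every t ≥ 0 the map ω̄ ↦ B̃(t, ω̄) is B(Ω̄)-measurable; and (iii) for every t ≥ 0, sup_{Q∈𝒬} Q({ω̄ : B̃(t, ω̄) ≠ ω̄(t)}) = 0. -/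

import Mathlib

open MeasureTheory Filter Topology
open scoped NNReal ENNReal

noncomputable section

/-- The space of all (not necessarily continuous) paths `ω̄ : [0,∞) → ℝ^d`,
with the product σ-algebra generated by the coordinate maps. -/
abbrev OmegaBar (d : ℕ) := ℝ≥0 → EuclideanSpace ℝ (Fin d)

set_option linter.unusedSectionVars false
namespace Lemma6

/-- The dyadic point `k / 2^q` in `ℝ≥0`. -/
def pt (k q : ℕ) : ℝ≥0 := (k : ℝ≥0) / 2 ^ q

lemma pt_coe (k q : ℕ) : ((pt k q : ℝ≥0) : ℝ) = (k : ℝ) / 2 ^ q := by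
  simp [pt, NNReal.coe_div]

lemma pt_double (k q : ℕ) : pt (2 * k) (q + 1) = pt k q := by
  unfold pt
  push_cast
  rw [pow_succ', mul_div_mul_left _ _ (two_ne_zero)]

lemma pt_mul_pow (k q e : ℕ) : pt (k * 2 ^ e) (q + e) = pt k q := by
  induction e with
  | zero => simp
  | succ e ih =>
      have : k * 2 ^ (e + 1) = 2 * (k * 2 ^ e) := by ring
      rw [this, show q + (e + 1) = (q + e) + 1 from rfl, pt_double, ih]

/-- Numerator of the level-`n` upper dyadic approximation of `t`. -/
def dnum (t : ℝ≥0) (n : ℕ) : ℕ := ⌈(t : ℝ) * 2 ^ n⌉₊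

/-- The level-`n` upper dyadic approximation of `t`. -/
def dpt (t : ℝ≥0) (n : ℕ) : ℝ≥0 := pt (dnum t n) n

lemma le_dnum (t : ℝ≥0) (n : ℕ) : (t : ℝ) * 2 ^ n ≤ dnum t n := Nat.le_ceil _

lemma dnum_lt (t : ℝ≥0) (n : ℕ) : (dnum t n : ℝ) < (t : ℝ) * 2 ^ n + 1 :=
  Nat.ceil_lt_add_one (by positivity)

lemma dnum_le {t : ℝ≥0} {N : ℕ} (h : (t : ℝ) ≤ N) (n : ℕ) : dnum t n ≤ N * 2 ^ n := by
  rw [dnum, Nat.ceil_le]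
  push_cast
  have : (0:ℝ) ≤ 2 ^ n := by positivity
  nlinarith

lemma le_dpt (t : ℝ≥0) (n : ℕ) : (t : ℝ) ≤ (dpt t n : ℝ) := by
  rw [dpt, pt_coe, le_div_iff₀ (by positivity)]
  exact le_dnum t n

lemma dpt_le (t : ℝ≥0) (n : ℕ) : (dpt t n : ℝ) ≤ (t : ℝ) + ((2:ℝ) ^ n)⁻¹ := by
  rw [dpt, pt_coe, div_le_iff₀ (by positivity)]
  have := dnum_lt t n
  have h2 : (0:ℝ) < 2 ^ n := by positivity
  rw [add_mul, inv_mul_cancel₀ (ne_of_gt h2)]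
  linarith

lemma dpt_zero (n : ℕ) : dpt 0 n = 0 := by
  simp [dpt, dnum, pt]

variable {E : Type*} [NormedAddCommGroup E]

/-- `f` has all level-`n` dyadic increments on `[0, N]` bounded by `(7/8)^n`, for `n ≥ m`. -/
def Incr (N m : ℕ) (f : ℝ≥0 → E) : Prop :=
  ∀ n, m ≤ n → ∀ k, k + 1 ≤ N * 2 ^ n →
    ‖f (pt (k + 1) n) - f (pt k n)‖ ≤ (7/8 : ℝ) ^ n

lemma chain (f : ℝ≥0 → E) {N m : ℕ} (H : Incr N m f) {n : ℕ} (hn : m ≤ n) :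
    ∀ p a b : ℕ, a ≤ b → b ≤ N * 2 ^ (n + p) → b ≤ a + 2 ^ p →
      ‖f (pt b (n + p)) - f (pt a (n + p))‖ ≤
        2 * ∑ j ∈ Finset.range (p + 1), (7/8 : ℝ) ^ (n + j) := by
  intro p
  induction p with
  | zero =>
      intro a b hab hbN hba
      simp only [Nat.add_zero] at hbN ⊢
      have hs : 2 * ∑ j ∈ Finset.range (0+1), (7/8:ℝ)^(n+j) = 2*(7/8:ℝ)^n := by
        norm_num
      rw [hs]
      rcases eq_or_lt_of_le hab with h | h
      · subst h
        simp only [sub_self, norm_zero]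
        positivity
      · have hb : b = a + 1 := by omega
        subst hb
        have hh := H n hn a hbN
        have h78 : (0:ℝ) ≤ (7/8:ℝ) ^ n := by positivity
        linarith
  | succ p ih =>
      intro a b hab hbN hba
      have hpow : (0:ℝ) ≤ (7/8:ℝ) ^ (n + (p+1)) := by positivity
      have hsumnn : (0:ℝ) ≤ ∑ j ∈ Finset.range (p + 1), (7/8 : ℝ) ^ (n + j) :=
        Finset.sum_nonneg fun j _ => by positivity
      have hsum : 2 * ∑ j ∈ Finset.range (p + 2), (7/8 : ℝ) ^ (n + j) =
          2 * ∑ j ∈ Finset.range (p + 1), (7/8 : ℝ) ^ (n + j) + 2 * (7/8:ℝ)^(n+(p+1)) := by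
        rw [Finset.sum_range_succ]; ring
      by_cases hsmall : b ≤ a + 1
      · rcases eq_or_lt_of_le hab with h | h
        · subst h
          simp only [sub_self, norm_zero]
          positivity
        · have hb : b = a + 1 := by omega
          subst hb
          have := H (n + (p+1)) (by omega) a hbN
          rw [hsum]; linarith
      · -- a + 2 ≤ b
        set a' := (a + 1) / 2 with ha'
        set b' := b / 2 with hb'
        have ha2 : 2 * a' = a ∨ 2 * a' = a + 1 := by omega
        have hb2 : 2 * b' = b ∨ 2 * b' + 1 = b := by omega
        have hbN' : b' ≤ N * 2 ^ (n + p) := by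
          rw [show n + (p+1) = (n+p) + 1 from rfl, pow_succ,
            show N * (2 ^ (n+p) * 2) = (N * 2 ^ (n+p)) * 2 by ring] at hbN
          omega
        have hab' : a' ≤ b' := by omega
        have hba' : b' ≤ a' + 2 ^ p := by
          have : (2:ℕ) ^ (p+1) = 2 ^ p * 2 := pow_succ 2 p
          omega
        have IH := ih a' b' hab' hbN' hba'
        have emid_b : pt (2 * b') ((n + p) + 1) = pt b' (n + p) := pt_double b' (n+p)
        have emid_a : pt (2 * a') ((n + p) + 1) = pt a' (n + p) := pt_double a' (n+p)
        have hq : n + (p + 1) = (n + p) + 1 := rfl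
        -- boundary at b
        have hbb : ‖f (pt b (n + (p+1))) - f (pt (2*b') (n + (p+1)))‖ ≤ (7/8:ℝ) ^ (n+(p+1)) := by
          rcases hb2 with h | h
          · rw [h]; simp only [sub_self, norm_zero]; positivity
          · have := H (n + (p+1)) (by omega) (2*b') (by omega)
            rw [show 2*b' + 1 = b from h] at this
            exact this
        -- boundary at a
        have haa : ‖f (pt (2*a') (n + (p+1))) - f (pt a (n + (p+1)))‖ ≤ (7/8:ℝ) ^ (n+(p+1)) := by
          rcases ha2 with h | h
          · rw [h]; simp only [sub_self, norm_zero]; positivity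
          · have hk : a + 1 ≤ N * 2 ^ (n + (p+1)) := by omega
            have := H (n + (p+1)) (by omega) a hk
            rw [show a + 1 = 2*a' from h.symm] at this
            exact this
        have hmid : ‖f (pt (2*b') (n + (p+1))) - f (pt (2*a') (n + (p+1)))‖ ≤
            2 * ∑ j ∈ Finset.range (p + 1), (7/8 : ℝ) ^ (n + j) := by
          rw [hq, emid_b, emid_a]; exact IH
        have hdecomp : f (pt b (n + (p+1))) - f (pt a (n + (p+1))) =
            (f (pt b (n + (p+1))) - f (pt (2*b') (n + (p+1)))) +
            (f (pt (2*b') (n + (p+1))) - f (pt (2*a') (n + (p+1)))) +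
            (f (pt (2*a') (n + (p+1))) - f (pt a (n + (p+1)))) := by abel
        calc ‖f (pt b (n + (p+1))) - f (pt a (n + (p+1)))‖ ≤
            ‖f (pt b (n + (p+1))) - f (pt (2*b') (n + (p+1)))‖ +
            ‖f (pt (2*b') (n + (p+1))) - f (pt (2*a') (n + (p+1)))‖ +
            ‖f (pt (2*a') (n + (p+1))) - f (pt a (n + (p+1)))‖ := by
              rw [hdecomp]; exact norm_add₃_le
          _ ≤ 2 * ∑ j ∈ Finset.range (p + 2), (7/8 : ℝ) ^ (n + j) := by
              rw [hsum]; linarith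

lemma geom_sum_le_eight (M : ℕ) : ∑ j ∈ Finset.range M, (7/8 : ℝ) ^ j ≤ 8 := by
  have h := geom_sum_eq (by norm_num : (7/8:ℝ) ≠ 1) M
  rw [h, div_le_iff_of_neg (by norm_num : (7/8:ℝ) - 1 < 0)]
  have : (0:ℝ) ≤ (7/8:ℝ) ^ M := by positivity
  linarith

lemma chain16 (f : ℝ≥0 → E) {N m : ℕ} (H : Incr N m f) {n : ℕ} (hn : m ≤ n)
    (p a b : ℕ) (haN : a ≤ N * 2 ^ (n + p)) (hbN : b ≤ N * 2 ^ (n + p))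
    (hab : b ≤ a + 2 ^ p) (hba : a ≤ b + 2 ^ p) :
    ‖f (pt b (n + p)) - f (pt a (n + p))‖ ≤ 16 * (7/8 : ℝ) ^ n := by
  have key : ∀ a b : ℕ, a ≤ b → b ≤ N * 2 ^ (n + p) → b ≤ a + 2 ^ p →
      ‖f (pt b (n + p)) - f (pt a (n + p))‖ ≤ 16 * (7/8 : ℝ) ^ n := by
    intro a b h1 h2 h3
    have := chain f H hn p a b h1 h2 h3
    have hsum : ∑ j ∈ Finset.range (p + 1), (7/8 : ℝ) ^ (n + j) ≤ 8 * (7/8:ℝ)^n := by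
      have : ∑ j ∈ Finset.range (p + 1), (7/8 : ℝ) ^ (n + j) =
          (7/8:ℝ)^n * ∑ j ∈ Finset.range (p + 1), (7/8 : ℝ) ^ j := by
        rw [Finset.mul_sum]
        exact Finset.sum_congr rfl fun j _ => by rw [pow_add]
      rw [this]
      have h8 := geom_sum_le_eight (p+1)
      have hnn : (0:ℝ) ≤ (7/8:ℝ)^n := by positivity
      nlinarith
    linarith
  rcases le_total a b with h | h
  · exact key a b h hbN hab
  · rw [norm_sub_rev]; exact key b a h haN hba

/-- The set of "good" paths: increments become dyadically regular on each `[0, N]`. -/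
def Good : Set (ℝ≥0 → E) := ⋂ N : ℕ, ⋃ m : ℕ, {f | Incr N m f}

lemma good_spec {f : ℝ≥0 → E} (hf : f ∈ Good) (N : ℕ) : ∃ m, Incr N m f := by
  have := Set.mem_iInter.1 hf N
  simpa using this

/-- Comparison of two levels of the dyadic approximation of `t`. -/
lemma incr_cauchy (f : ℝ≥0 → E) {N m : ℕ} (H : Incr N m f) {t : ℝ≥0} (ht : (t : ℝ) ≤ N)
    {n n' : ℕ} (hmn : m ≤ n) (hnn' : n ≤ n') :
    ‖f (dpt t n') - f (dpt t n)‖ ≤ 16 * (7/8 : ℝ) ^ n := by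
  set p := n' - n with hp
  have hnp : n + p = n' := by omega
  set a := dnum t n * 2 ^ p with ha
  set b := dnum t n' with hb
  have hpta : pt a (n + p) = dpt t n := pt_mul_pow (dnum t n) n p
  have h2p : (0:ℝ) < 2 ^ p := by positivity
  have h2n : (0:ℝ) < 2 ^ n := by positivity
  have haR : (a : ℝ) ≤ (t:ℝ) * 2 ^ n' + 2 ^ p := by
    have h1 : (dnum t n : ℝ) < (t:ℝ) * 2 ^ n + 1 := dnum_lt t n
    have : (a : ℝ) = (dnum t n : ℝ) * 2 ^ p := by push_cast [ha]; ring
    rw [this, ← hnp, pow_add]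
    nlinarith
  have haR' : (t:ℝ) * 2 ^ n' ≤ (a : ℝ) := by
    have h1 := le_dnum t n
    have : (a : ℝ) = (dnum t n : ℝ) * 2 ^ p := by push_cast [ha]; ring
    rw [this, ← hnp, pow_add]
    nlinarith
  have hbR : (b : ℝ) < (t:ℝ) * 2 ^ n' + 1 := dnum_lt t n'
  have hbR' : (t:ℝ) * 2 ^ n' ≤ (b : ℝ) := le_dnum t n'
  have hone : (1:ℝ) ≤ 2 ^ p := one_le_pow₀ (by norm_num)
  have hab : b ≤ a + 2 ^ p := by
    have : (b : ℝ) ≤ ((a + 2 ^ p : ℕ) : ℝ) := by push_cast; linarith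
    exact_mod_cast this
  have hba : a ≤ b + 2 ^ p := by
    have : (a : ℝ) ≤ ((b + 2 ^ p : ℕ) : ℝ) := by push_cast; linarith
    exact_mod_cast this
  have haN : a ≤ N * 2 ^ (n + p) := by
    have h1 : dnum t n ≤ N * 2 ^ n := dnum_le ht n
    calc a = dnum t n * 2 ^ p := rfl
      _ ≤ (N * 2 ^ n) * 2 ^ p := by exact Nat.mul_le_mul_right _ h1
      _ = N * 2 ^ (n + p) := by rw [pow_add]; ring
  have hbN : b ≤ N * 2 ^ (n + p) := by rw [hnp]; exact dnum_le ht n'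
  have e1 : pt b n' = dpt t n' := rfl
  have := chain16 f H hmn p a b haN hbN hab hba
  rw [hnp] at this hpta
  rw [hpta] at this
  rw [← e1]
  exact this

/-- Comparison of the dyadic approximations of two nearby times, at a common deep level. -/
lemma incr_close (f : ℝ≥0 → E) {N m : ℕ} (H : Incr N m f) {s t : ℝ≥0}
    (hs : (s : ℝ) ≤ N) (ht : (t : ℝ) ≤ N) {n : ℕ} (hn : m ≤ n)
    (hst : |(s:ℝ) - (t:ℝ)| ≤ ((2:ℝ) ^ (n+1))⁻¹) {p : ℕ} (hp : n + 1 ≤ p) :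
    ‖f (dpt s p) - f (dpt t p)‖ ≤ 16 * (7/8 : ℝ) ^ n := by
  have hnp : n + (p - n) = p := by omega
  set a := dnum t p with ha
  set b := dnum s p with hb
  have h2p : (0:ℝ) < 2 ^ p := by positivity
  have hsplit : (2:ℝ) ^ p = 2 ^ (p - n - 1) * 2 ^ (n + 1) := by
    rw [← pow_add]
    congr 1
    omega
  have hkey : ∀ u v : ℝ≥0, |(u:ℝ) - v| ≤ ((2:ℝ) ^ (n+1))⁻¹ →
      dnum u p ≤ dnum v p + 2 ^ (p - n) := by
    intro u v huv
    have h1 : (dnum u p : ℝ) < (u:ℝ) * 2 ^ p + 1 := dnum_lt u p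
    have h2 : (v:ℝ) * 2 ^ p ≤ dnum v p := le_dnum v p
    have h3 : (u:ℝ) * 2 ^ p ≤ (v:ℝ) * 2 ^ p + 2 ^ (p - n - 1) := by
      have habs : (u:ℝ) - v ≤ ((2:ℝ) ^ (n+1))⁻¹ := (abs_le.1 huv).2
      have h2n1 : (0:ℝ) < 2 ^ (n+1) := by positivity
      have : ((2:ℝ) ^ (n+1))⁻¹ * 2 ^ p = 2 ^ (p - n - 1) := by
        rw [hsplit]; field_simp
      nlinarith
    have hlt : (dnum u p : ℝ) < (dnum v p : ℝ) + 2 ^ (p - n - 1) + 1 := by linarith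
    have hnat : dnum u p < dnum v p + 2 ^ (p - n - 1) + 1 := by
      exact_mod_cast (by push_cast; linarith : (dnum u p : ℝ) < ((dnum v p + 2 ^ (p - n - 1) + 1 : ℕ) : ℝ))
    have hpow : 2 ^ (p - n - 1) + 1 ≤ 2 ^ (p - n) := by
      have : (2:ℕ) ^ (p - n) = 2 ^ (p - n - 1) * 2 := by
        rw [← pow_succ]
        congr 1
        omega
      have h1le : (1:ℕ) ≤ 2 ^ (p - n - 1) := Nat.one_le_two_pow
      omega
    omega
  have hab : b ≤ a + 2 ^ (p - n) := hkey s t hst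
  have hba : a ≤ b + 2 ^ (p - n) := hkey t s (by rwa [abs_sub_comm])
  have haN : a ≤ N * 2 ^ (n + (p - n)) := by rw [hnp]; exact dnum_le ht p
  have hbN : b ≤ N * 2 ^ (n + (p - n)) := by rw [hnp]; exact dnum_le hs p
  have := chain16 f H hn (p - n) a b haN hbN hab hba
  rw [hnp] at this
  exact this

variable [CompleteSpace E]

lemma good_tendsto {f : ℝ≥0 → E} (hf : f ∈ Good) (t : ℝ≥0) :
    ∃ L : E, Tendsto (fun n => f (dpt t n)) atTop (𝓝 L) := by
  set N := ⌈(t:ℝ)⌉₊ + 1 with hN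
  obtain ⟨m, H⟩ := good_spec hf N
  have ht : (t : ℝ) ≤ N := by
    have := Nat.le_ceil (t:ℝ)
    push_cast [hN]
    linarith
  have hcauchy : CauchySeq (fun n => f (dpt t n)) := by
    rw [Metric.cauchySeq_iff']
    intro ε hε
    have h0 : Tendsto (fun n : ℕ => 16 * (7/8:ℝ) ^ n) atTop (𝓝 0) := by
      have := tendsto_pow_atTop_nhds_zero_of_lt_one (by norm_num : (0:ℝ) ≤ 7/8)
        (by norm_num : (7/8:ℝ) < 1)
      simpa using this.const_mul (16:ℝ)
    have h1 : ∀ᶠ n : ℕ in atTop, 16 * (7/8:ℝ) ^ n < ε := h0.eventually (gt_mem_nhds hε)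
    obtain ⟨n₀, hn₀, hn₀'⟩ := ((eventually_ge_atTop m).and h1).exists
    refine ⟨n₀, fun n hn => ?_⟩
    rw [dist_eq_norm]
    calc ‖f (dpt t n) - f (dpt t n₀)‖ ≤ 16 * (7/8:ℝ) ^ n₀ :=
          incr_cauchy f H ht hn₀ hn
      _ < ε := hn₀'
  exact cauchySeq_tendsto_of_complete hcauchy

omit [CompleteSpace E] in
lemma good_lim_bound (f : ℝ≥0 → E) {N m : ℕ} (H : Incr N m f) {t : ℝ≥0} (ht : (t : ℝ) ≤ N)
    {L : E} (hL : Tendsto (fun n => f (dpt t n)) atTop (𝓝 L)) {n : ℕ} (hn : m ≤ n) :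
    ‖L - f (dpt t n)‖ ≤ 16 * (7/8 : ℝ) ^ n := by
  have h1 : Tendsto (fun n' => ‖f (dpt t n') - f (dpt t n)‖) atTop (𝓝 ‖L - f (dpt t n)‖) :=
    ((hL.sub tendsto_const_nhds).norm)
  refine le_of_tendsto h1 ?_
  filter_upwards [eventually_ge_atTop n] with n' hn'
  exact incr_cauchy f H ht hn hn'

/-- The modification: limit along upper dyadic approximations, with the value at `0`
subtracted, and `0` off the good set. -/
def Bproc (t : ℝ≥0) (f : ℝ≥0 → E) : E :=
  limUnder atTop (fun n => Good.indicator (fun g : ℝ≥0 → E => g (dpt t n) - g 0) f)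

lemma Bproc_spec (t : ℝ≥0) (f : ℝ≥0 → E) :
    Tendsto (fun n => Good.indicator (fun g : ℝ≥0 → E => g (dpt t n) - g 0) f) atTop
      (𝓝 (Bproc t f)) := by
  by_cases hf : f ∈ Good
  · obtain ⟨L, hL⟩ := good_tendsto hf t
    have h2 : Tendsto (fun n => Good.indicator (fun g : ℝ≥0 → E => g (dpt t n) - g 0) f)
        atTop (𝓝 (L - f 0)) := by
      simp only [Set.indicator_of_mem hf]
      exact hL.sub tendsto_const_nhds
    rwa [Bproc, h2.limUnder_eq]
  · have h2 : Tendsto (fun n => Good.indicator (fun g : ℝ≥0 → E => g (dpt t n) - g 0) f)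
        atTop (𝓝 0) := by
      simp only [Set.indicator_of_notMem hf]
      exact tendsto_const_nhds
    rwa [Bproc, h2.limUnder_eq]

lemma Bproc_of_not_good {f : ℝ≥0 → E} (hf : f ∉ Good) (t : ℝ≥0) : Bproc t f = 0 := by
  have h2 : Tendsto (fun n => Good.indicator (fun g : ℝ≥0 → E => g (dpt t n) - g 0) f)
      atTop (𝓝 0) := by
    simp only [Set.indicator_of_notMem hf]
    exact tendsto_const_nhds
  rw [Bproc, h2.limUnder_eq]

lemma Bproc_tendsto_of_good {f : ℝ≥0 → E} (hf : f ∈ Good) (t : ℝ≥0) :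
    Tendsto (fun n => f (dpt t n) - f 0) atTop (𝓝 (Bproc t f)) := by
  have := Bproc_spec t f
  simpa only [Set.indicator_of_mem hf] using this

lemma Bproc_zero (f : ℝ≥0 → E) : Bproc 0 f = 0 := by
  have h2 : Tendsto (fun n => Good.indicator (fun g : ℝ≥0 → E => g (dpt 0 n) - g 0) f)
      atTop (𝓝 0) := by
    have : ∀ n : ℕ, Good.indicator (fun g : ℝ≥0 → E => g (dpt 0 n) - g 0) f = 0 := by
      intro n
      rw [dpt_zero]
      by_cases hf : f ∈ Good
      · simp [Set.indicator_of_mem hf]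
      · simp [Set.indicator_of_notMem hf]
    simp only [this]
    exact tendsto_const_nhds
  rw [Bproc, h2.limUnder_eq]

lemma Bproc_continuous (f : ℝ≥0 → E) : Continuous (fun t => Bproc t f) := by
  by_cases hf : f ∈ Good
  · rw [Metric.continuous_iff]
    intro t ε hε
    set N := ⌈(t:ℝ)⌉₊ + 2 with hN
    obtain ⟨m, H⟩ := good_spec hf N
    have htN : (t:ℝ) + 1 ≤ N := by
      have := Nat.le_ceil (t:ℝ)
      push_cast [hN]
      linarith
    have h0 : Tendsto (fun n : ℕ => 16 * (7/8:ℝ) ^ n) atTop (𝓝 0) := by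
      have := tendsto_pow_atTop_nhds_zero_of_lt_one (by norm_num : (0:ℝ) ≤ 7/8)
        (by norm_num : (7/8:ℝ) < 1)
      simpa using this.const_mul (16:ℝ)
    have h1 : ∀ᶠ n : ℕ in atTop, 16 * (7/8:ℝ) ^ n < ε := h0.eventually (gt_mem_nhds hε)
    obtain ⟨n, hnm, hnε⟩ := ((eventually_ge_atTop m).and h1).exists
    refine ⟨((2:ℝ) ^ (n+1))⁻¹, by positivity, fun s hst => ?_⟩
    have hdist : |(s:ℝ) - (t:ℝ)| ≤ ((2:ℝ) ^ (n+1))⁻¹ := by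
      rw [NNReal.dist_eq] at hst
      exact le_of_lt hst
    have hinv : ((2:ℝ) ^ (n+1))⁻¹ ≤ 1 := by
      rw [inv_le_one₀ (by positivity)]
      exact one_le_pow₀ (by norm_num)
    have hsN : (s:ℝ) ≤ N := by
      have := (abs_le.1 hdist).2
      linarith
    have htN' : (t:ℝ) ≤ N := by linarith
    obtain ⟨Ls, hLs⟩ := good_tendsto hf s
    obtain ⟨Lt, hLt⟩ := good_tendsto hf t
    have hBs : Bproc s f = Ls - f 0 := by
      have h2 := Bproc_tendsto_of_good hf s
      exact tendsto_nhds_unique h2 (hLs.sub tendsto_const_nhds)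
    have hBt : Bproc t f = Lt - f 0 := by
      have h2 := Bproc_tendsto_of_good hf t
      exact tendsto_nhds_unique h2 (hLt.sub tendsto_const_nhds)
    have hlim : Tendsto (fun p => ‖f (dpt s p) - f (dpt t p)‖) atTop (𝓝 ‖Ls - Lt‖) :=
      (hLs.sub hLt).norm
    have hle : ‖Ls - Lt‖ ≤ 16 * (7/8:ℝ) ^ n := by
      refine le_of_tendsto hlim ?_
      filter_upwards [eventually_ge_atTop (n+1)] with p hp
      exact incr_close f H hsN htN' hnm hdist hp
    rw [dist_eq_norm, hBs, hBt]
    calc ‖Ls - f 0 - (Lt - f 0)‖ = ‖Ls - Lt‖ := by congr 1; abel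
      _ ≤ 16 * (7/8:ℝ) ^ n := hle
      _ < ε := hnε
  · have : (fun t => Bproc t f) = fun _ => (0 : E) := by
      funext t
      exact Bproc_of_not_good hf t
    rw [this]
    exact continuous_const

section Meas

variable [MeasurableSpace E] [BorelSpace E] [SecondCountableTopology E]

lemma measurableSet_good : MeasurableSet (Good : Set (ℝ≥0 → E)) := by
  have hev : ∀ x : ℝ≥0, Measurable fun f : ℝ≥0 → E => f x := fun x => measurable_pi_apply x
  have hIncr : ∀ N m : ℕ, MeasurableSet {f : ℝ≥0 → E | Incr N m f} := by
    intro N m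
    have heq : {f : ℝ≥0 → E | Incr N m f} = ⋂ (n : ℕ), ⋂ (k : ℕ),
        {f : ℝ≥0 → E | m ≤ n → k + 1 ≤ N * 2 ^ n →
          ‖f (pt (k+1) n) - f (pt k n)‖ ≤ (7/8:ℝ)^n} := by
      ext f
      simp only [Set.mem_setOf_eq, Set.mem_iInter, Incr]
      tauto
    rw [heq]
    refine MeasurableSet.iInter fun n => MeasurableSet.iInter fun k => ?_
    by_cases h1 : m ≤ n
    · by_cases h2 : k + 1 ≤ N * 2 ^ n
      · have : {f : ℝ≥0 → E | m ≤ n → k + 1 ≤ N * 2 ^ n →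
            ‖f (pt (k+1) n) - f (pt k n)‖ ≤ (7/8:ℝ)^n} =
            {f : ℝ≥0 → E | ‖f (pt (k+1) n) - f (pt k n)‖ ≤ (7/8:ℝ)^n} := by
          ext f
          simp [h1, h2]
        rw [this]
        exact measurableSet_le (((hev _).sub (hev _)).norm) measurable_const
      · have : {f : ℝ≥0 → E | m ≤ n → k + 1 ≤ N * 2 ^ n →
            ‖f (pt (k+1) n) - f (pt k n)‖ ≤ (7/8:ℝ)^n} = Set.univ := by
          ext f
          simp [h2]
        rw [this]
        exact MeasurableSet.univ
    · have : {f : ℝ≥0 → E | m ≤ n → k + 1 ≤ N * 2 ^ n →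
          ‖f (pt (k+1) n) - f (pt k n)‖ ≤ (7/8:ℝ)^n} = Set.univ := by
        ext f
        simp [h1]
      rw [this]
      exact MeasurableSet.univ
  exact MeasurableSet.iInter fun N => MeasurableSet.iUnion fun m => hIncr N m

lemma measurable_Bproc (t : ℝ≥0) : Measurable (Bproc t : (ℝ≥0 → E) → E) := by
  have hev : ∀ x : ℝ≥0, Measurable fun f : ℝ≥0 → E => f x := fun x => measurable_pi_apply x
  refine measurable_of_tendsto_metrizable
    (f := fun n (f : ℝ≥0 → E) => Good.indicator (fun g : ℝ≥0 → E => g (dpt t n) - g 0) f)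
    (fun n => Measurable.indicator ((hev _).sub (hev 0)) measurableSet_good) ?_
  rw [tendsto_pi_nhds]
  exact fun f => Bproc_spec t f

end Meas

section Prob

variable [MeasurableSpace E] [BorelSpace E] [SecondCountableTopology E]

omit [CompleteSpace E] in
lemma chebyshev (μ : Measure (ℝ≥0 → E)) (C : ℝ)
    (hmom : ∀ s t : ℝ≥0, ∫⁻ f : ℝ≥0 → E, ENNReal.ofReal (‖f t - f s‖ ^ 4) ∂μ ≤
      ENNReal.ofReal (C * |(t : ℝ) - (s : ℝ)| ^ 2))
    (a b : ℝ≥0) {δ : ℝ} (hδ : 0 < δ) :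
    μ {f : ℝ≥0 → E | δ ≤ ‖f b - f a‖} ≤
      ENNReal.ofReal (C * |(b : ℝ) - (a : ℝ)| ^ 2) / ENNReal.ofReal (δ ^ 4) := by
  set g : (ℝ≥0 → E) → ℝ≥0∞ := fun f => ENNReal.ofReal (‖f b - f a‖ ^ 4) with hg
  have hgm : AEMeasurable g μ :=
    ((((measurable_pi_apply b).sub (measurable_pi_apply a)).norm.pow_const 4).ennreal_ofReal).aemeasurable
  have hsub : {f : ℝ≥0 → E | δ ≤ ‖f b - f a‖} ⊆ {f | ENNReal.ofReal (δ ^ 4) ≤ g f} := by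
    intro f hf
    simp only [Set.mem_setOf_eq] at hf ⊢
    exact ENNReal.ofReal_le_ofReal (pow_le_pow_left₀ hδ.le hf 4)
  calc μ {f : ℝ≥0 → E | δ ≤ ‖f b - f a‖} ≤ μ {f | ENNReal.ofReal (δ ^ 4) ≤ g f} :=
        measure_mono hsub
    _ ≤ (∫⁻ f, g f ∂μ) / ENNReal.ofReal (δ ^ 4) :=
        meas_ge_le_lintegral_div hgm
          (ne_of_gt (ENNReal.ofReal_pos.2 (by positivity))) ENNReal.ofReal_ne_top
    _ ≤ _ := ENNReal.div_le_div_right (hmom a b) _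

omit [CompleteSpace E] in
lemma good_compl_null (μ : Measure (ℝ≥0 → E)) (C : ℝ)
    (hmom : ∀ s t : ℝ≥0, ∫⁻ f : ℝ≥0 → E, ENNReal.ofReal (‖f t - f s‖ ^ 4) ∂μ ≤
      ENNReal.ofReal (C * |(t : ℝ) - (s : ℝ)| ^ 2)) :
    μ (Good : Set (ℝ≥0 → E))ᶜ = 0 := by
  set Cm := max C 0 with hCm
  set r : ℝ≥0∞ := ENNReal.ofReal (2048/2401) with hr
  have hrlt : r < 1 := by
    rw [hr]
    exact ENNReal.ofReal_lt_one.2 (by norm_num)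
  -- single increment bound
  have hincr : ∀ n k : ℕ,
      μ {f : ℝ≥0 → E | (7/8:ℝ)^n ≤ ‖f (pt (k+1) n) - f (pt k n)‖} ≤
        ENNReal.ofReal (Cm * (1024/2401:ℝ)^n) := by
    intro n k
    have hδ : (0:ℝ) < (7/8:ℝ)^n := by positivity
    have h1 := chebyshev μ C hmom (pt k n) (pt (k+1) n) hδ
    have habs : |(pt (k+1) n : ℝ) - (pt k n : ℝ)| = ((2:ℝ)^n)⁻¹ := by
      rw [pt_coe, pt_coe]
      push_cast
      rw [div_sub_div_same, add_sub_cancel_left, abs_of_pos (by positivity)]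
      rw [one_div]
    rw [habs] at h1
    refine h1.trans ?_
    rw [← ENNReal.ofReal_div_of_pos (by positivity)]
    refine ENNReal.ofReal_le_ofReal ?_
    have e1 : (((7/8:ℝ)^n)^4 : ℝ) = (2401/4096:ℝ)^n := by
      rw [← pow_mul, mul_comm, pow_mul]
      norm_num
    have e2 : (((2:ℝ)^n)⁻¹)^2 = (1/4:ℝ)^n := by
      rw [← inv_pow, ← pow_mul, mul_comm, pow_mul]
      norm_num
    rw [div_le_iff₀ (by positivity : (0:ℝ) < ((7/8:ℝ)^n)^4), e1]
    have e3 : (Cm * (1024/2401:ℝ)^n) * (2401/4096:ℝ)^n = Cm * (1/4:ℝ)^n := by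
      rw [mul_assoc, ← mul_pow]
      norm_num
    rw [e3, ← e2]
    have hC : C ≤ Cm := le_max_left _ _
    have hnn : (0:ℝ) ≤ (((2:ℝ)^n)⁻¹)^2 := by positivity
    nlinarith
  -- level bound
  have hlev : ∀ N n : ℕ,
      μ (⋃ k ∈ Finset.range (N * 2^n),
          {f : ℝ≥0 → E | (7/8:ℝ)^n ≤ ‖f (pt (k+1) n) - f (pt k n)‖}) ≤
        ENNReal.ofReal ((N : ℝ) * Cm) * r ^ n := by
    intro N n
    calc μ (⋃ k ∈ Finset.range (N * 2^n), _) ≤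
        ∑ k ∈ Finset.range (N * 2^n),
          μ {f : ℝ≥0 → E | (7/8:ℝ)^n ≤ ‖f (pt (k+1) n) - f (pt k n)‖} :=
        measure_biUnion_finset_le _ _
      _ ≤ (Finset.range (N * 2^n)).card • ENNReal.ofReal (Cm * (1024/2401:ℝ)^n) :=
        Finset.sum_le_card_nsmul _ _ _ (fun k _ => hincr n k)
      _ = (↑(N * 2^n) : ℝ≥0∞) * ENNReal.ofReal (Cm * (1024/2401:ℝ)^n) := by
        rw [Finset.card_range, nsmul_eq_mul]
      _ = ENNReal.ofReal ((N : ℝ) * Cm) * r ^ n := by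
        rw [hr, ← ENNReal.ofReal_pow (by norm_num), ← ENNReal.ofReal_natCast,
          ← ENNReal.ofReal_mul (by positivity), ← ENNReal.ofReal_mul (by positivity)]
        congr 1
        push_cast
        rw [show ((2048:ℝ)/2401)^n = 2^n * (1024/2401:ℝ)^n by rw [← mul_pow]; norm_num]
        ring
  -- tail bound for the complement of Incr N m
  have htail : ∀ N m : ℕ, μ ({f : ℝ≥0 → E | Incr N m f}ᶜ) ≤
      (ENNReal.ofReal ((N : ℝ) * Cm) * (1 - r)⁻¹) * r ^ m := by
    intro N m
    have hsub : {f : ℝ≥0 → E | Incr N m f}ᶜ ⊆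
        ⋃ j : ℕ, ⋃ k ∈ Finset.range (N * 2^(m+j)),
          {f : ℝ≥0 → E | (7/8:ℝ)^(m+j) ≤ ‖f (pt (k+1) (m+j)) - f (pt k (m+j))‖} := by
      intro f hf
      simp only [Set.mem_compl_iff, Set.mem_setOf_eq, Incr, not_forall] at hf
      obtain ⟨n, hmn, k, hk, hnorm⟩ := hf
      push_neg at hnorm
      refine Set.mem_iUnion.2 ⟨n - m, ?_⟩
      rw [show m + (n - m) = n by omega]
      refine Set.mem_iUnion.2 ⟨k, ?_⟩
      refine Set.mem_iUnion.2 ⟨Finset.mem_range.2 (by omega), ?_⟩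
      exact le_of_lt hnorm
    calc μ ({f : ℝ≥0 → E | Incr N m f}ᶜ) ≤
        ∑' j : ℕ, μ (⋃ k ∈ Finset.range (N * 2^(m+j)),
          {f : ℝ≥0 → E | (7/8:ℝ)^(m+j) ≤ ‖f (pt (k+1) (m+j)) - f (pt k (m+j))‖}) :=
        (measure_mono hsub).trans (measure_iUnion_le _)
      _ ≤ ∑' j : ℕ, ENNReal.ofReal ((N : ℝ) * Cm) * r ^ (m+j) :=
        ENNReal.tsum_le_tsum (fun j => hlev N (m+j))
      _ = (ENNReal.ofReal ((N : ℝ) * Cm) * (1 - r)⁻¹) * r ^ m := by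
        have : ∀ j : ℕ, ENNReal.ofReal ((N : ℝ) * Cm) * r ^ (m+j) =
            (ENNReal.ofReal ((N : ℝ) * Cm) * r ^ m) * r ^ j := by
          intro j
          rw [pow_add]
          ring
        rw [tsum_congr this, ENNReal.tsum_mul_left, ENNReal.tsum_geometric]
        ring
  -- conclude
  have hN0 : ∀ N : ℕ, μ ((⋃ m : ℕ, {f : ℝ≥0 → E | Incr N m f})ᶜ) = 0 := by
    intro N
    rw [Set.compl_iUnion]
    set K := ENNReal.ofReal ((N : ℝ) * Cm) * (1 - r)⁻¹ with hK
    have hKne : K ≠ ⊤ := by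
      rw [hK]
      exact ENNReal.mul_ne_top ENNReal.ofReal_ne_top
        (ENNReal.inv_ne_top.2 (ne_of_gt (tsub_pos_iff_lt.2 hrlt)))
    have hle : ∀ m : ℕ, μ (⋂ m' : ℕ, ({f : ℝ≥0 → E | Incr N m' f}ᶜ)) ≤ K * r ^ m := by
      intro m
      exact (measure_mono (Set.iInter_subset _ m)).trans (htail N m)
    have htend : Tendsto (fun m : ℕ => K * r ^ m) atTop (𝓝 0) := by
      have h1 : Tendsto (fun m : ℕ => r ^ m) atTop (𝓝 0) :=
        ENNReal.tendsto_pow_atTop_nhds_zero_of_lt_one hrlt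
      have := ENNReal.Tendsto.const_mul h1 (Or.inr hKne)
      simpa using this
    have := ge_of_tendsto' htend hle
    exact le_antisymm (by simpa using this) zero_le
  have hcover : (Good : Set (ℝ≥0 → E))ᶜ =
      ⋃ N : ℕ, ((⋃ m : ℕ, {f : ℝ≥0 → E | Incr N m f})ᶜ) := by
    rw [Good, Set.compl_iInter]
  rw [hcover]
  refine le_antisymm ?_ zero_le
  calc μ _ ≤ ∑' N : ℕ, μ ((⋃ m : ℕ, {f : ℝ≥0 → E | Incr N m f})ᶜ) := measure_iUnion_le _
    _ = 0 := by
        rw [ENNReal.tsum_eq_zero]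
        exact hN0

end Prob

end Lemma6

/-- Lemma 6 of the paper: if every `Q` in a nonempty family `𝒬` of probability measures on
`Ω̄` charges `{ω̄(0) = 0}` with full mass and the fourth moments of increments are uniformly
bounded by `C·|t−s|²`, then the canonical process admits a modification `B̃` with everywhere
continuous paths starting from `0`, such that `sup_{Q∈𝒬} Q(B̃_t ≠ ω̄(t)) = 0` for all `t`. -/
theorem stmt6 {d : ℕ} (hd : 1 ≤ d)
    (Q : Set (Measure (OmegaBar d))) (hne : Q.Nonempty)
    (hprob : ∀ q ∈ Q, IsProbabilityMeasure q)
    (hzero : ∀ q ∈ Q, q {ω : OmegaBar d | ω 0 = 0} = 1)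
    (C : ℝ)
    (hmom : ∀ q ∈ Q, ∀ s t : ℝ≥0,
      ∫⁻ ω : OmegaBar d, ENNReal.ofReal (‖ω t - ω s‖ ^ 4) ∂q ≤
        ENNReal.ofReal (C * |(t : ℝ) - (s : ℝ)| ^ 2)) :
    ∃ B : ℝ≥0 → OmegaBar d → EuclideanSpace ℝ (Fin d),
      (∀ ω : OmegaBar d, Continuous (fun t => B t ω) ∧ B 0 ω = 0) ∧
      (∀ t : ℝ≥0, Measurable (B t)) ∧
      (∀ t : ℝ≥0, ∀ q ∈ Q, q {ω : OmegaBar d | B t ω ≠ ω t} = 0) := by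
  classical
  refine ⟨fun t ω => Lemma6.Bproc t ω, fun ω => ⟨Lemma6.Bproc_continuous ω, Lemma6.Bproc_zero ω⟩,
    fun t => Lemma6.measurable_Bproc t, ?_⟩
  intro t q hq
  haveI := hprob q hq
  have hGood : q (Lemma6.Good : Set (OmegaBar d))ᶜ = 0 :=
    Lemma6.good_compl_null q C (hmom q hq)
  have hms : MeasurableSet {ω : OmegaBar d | ω 0 = 0} :=
    (measurable_pi_apply 0) (measurableSet_singleton 0)
  have hzero' : q {ω : OmegaBar d | ω 0 ≠ 0} = 0 := by
    have h1 : {ω : OmegaBar d | ω 0 ≠ 0} = {ω : OmegaBar d | ω 0 = 0}ᶜ := rfl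
    rw [h1, measure_compl hms (measure_ne_top q _), hzero q hq, measure_univ]
    simp
  -- the identification set on good paths
  set T := {ω : OmegaBar d | ω ∈ Lemma6.Good ∧ ω 0 = 0 ∧ Lemma6.Bproc t ω ≠ ω t} with hTdef
  have hT : q T = 0 := by
    set Cm := max C 0 with hCm
    -- null small sets
    have hS : ∀ (δ : ℝ), 0 < δ → ∀ p₀ : ℕ,
        q (⋂ (p : ℕ) (_ : p₀ ≤ p), {ω : OmegaBar d | δ ≤ ‖ω (Lemma6.dpt t p) - ω t‖}) = 0 := by
      intro δ hδ p₀
      set M := ENNReal.ofReal (Cm / δ ^ 4) with hM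
      have hbound : ∀ p : ℕ, q {ω : OmegaBar d | δ ≤ ‖ω (Lemma6.dpt t p) - ω t‖} ≤
          M * (ENNReal.ofReal (1/4 : ℝ)) ^ p := by
        intro p
        have h1 := Lemma6.chebyshev q C (hmom q hq) t (Lemma6.dpt t p) hδ
        refine h1.trans ?_
        rw [← ENNReal.ofReal_div_of_pos (by positivity), ← ENNReal.ofReal_pow (by norm_num),
          ← ENNReal.ofReal_mul (by positivity)]
        refine ENNReal.ofReal_le_ofReal ?_
        have h2 : |(Lemma6.dpt t p : ℝ) - (t : ℝ)| ≤ ((2:ℝ) ^ p)⁻¹ := by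
          rw [abs_of_nonneg (by linarith [Lemma6.le_dpt t p])]
          linarith [Lemma6.dpt_le t p]
        have h3 : |(Lemma6.dpt t p : ℝ) - (t : ℝ)| ^ 2 ≤ (1/4 : ℝ) ^ p := by
          have h4 : (((2:ℝ) ^ p)⁻¹) ^ 2 = (1/4 : ℝ) ^ p := by
            rw [← inv_pow, ← pow_mul, mul_comm, pow_mul]
            norm_num
          rw [← h4]
          exact pow_le_pow_left₀ (abs_nonneg _) h2 2
        have hC : C ≤ Cm := le_max_left _ _
        have hd4 : (0:ℝ) < δ ^ 4 := by positivity
        have h14 : (0:ℝ) ≤ (1/4:ℝ)^p := by positivity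
        have habs : (0:ℝ) ≤ |(Lemma6.dpt t p : ℝ) - (t : ℝ)| ^ 2 := by positivity
        have hkey : C * |(Lemma6.dpt t p : ℝ) - (t : ℝ)| ^ 2 ≤ Cm * (1/4:ℝ)^p := by
          rcases le_or_gt 0 C with h | h
          · calc C * |(Lemma6.dpt t p : ℝ) - (t : ℝ)| ^ 2 ≤ C * (1/4:ℝ)^p :=
                mul_le_mul_of_nonneg_left h3 h
              _ ≤ Cm * (1/4:ℝ)^p := mul_le_mul_of_nonneg_right hC h14
          · have h5 : C * |(Lemma6.dpt t p : ℝ) - (t : ℝ)| ^ 2 ≤ 0 :=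
              mul_nonpos_of_nonpos_of_nonneg h.le habs
            have h6 : (0:ℝ) ≤ Cm * (1/4:ℝ)^p := mul_nonneg (le_max_right C 0) h14
            linarith
        calc C * |(Lemma6.dpt t p : ℝ) - (t : ℝ)| ^ 2 / δ ^ 4 ≤ Cm * (1/4:ℝ)^p / δ ^ 4 := by
              gcongr
          _ = Cm / δ ^ 4 * (1/4:ℝ)^p := by ring
      have htend : Tendsto (fun p : ℕ => M * (ENNReal.ofReal (1/4 : ℝ)) ^ p) atTop (𝓝 0) := by
        have h1 : Tendsto (fun p : ℕ => (ENNReal.ofReal (1/4 : ℝ)) ^ p) atTop (𝓝 0) :=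
          ENNReal.tendsto_pow_atTop_nhds_zero_of_lt_one (ENNReal.ofReal_lt_one.2 (by norm_num))
        have h2 := ENNReal.Tendsto.const_mul (a := M) h1 (Or.inr (by rw [hM]; exact ENNReal.ofReal_ne_top))
        simpa using h2
      have hle : ∀ᶠ p : ℕ in atTop,
          q (⋂ (p : ℕ) (_ : p₀ ≤ p), {ω : OmegaBar d | δ ≤ ‖ω (Lemma6.dpt t p) - ω t‖}) ≤
            M * (ENNReal.ofReal (1/4 : ℝ)) ^ p := by
        filter_upwards [eventually_ge_atTop p₀] with p hp
        exact (measure_mono (Set.iInter_subset_of_subset p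
          (Set.iInter_subset _ hp))).trans (hbound p)
      have := ge_of_tendsto htend hle
      exact le_antisymm (by simpa using this) zero_le
    -- cover T
    have hcov : T ⊆ ⋃ (j : ℕ) (p₀ : ℕ),
        ⋂ (p : ℕ) (_ : p₀ ≤ p),
          {ω : OmegaBar d | 1/((j:ℝ)+1) ≤ ‖ω (Lemma6.dpt t p) - ω t‖} := by
      intro ω hω
      obtain ⟨hg, h0, hne'⟩ := hω
      have hδ : (0:ℝ) < ‖Lemma6.Bproc t ω - ω t‖ := by
        rw [norm_pos_iff, sub_ne_zero]
        exact hne'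
      obtain ⟨j, hj⟩ := exists_nat_one_div_lt (by positivity : (0:ℝ) < ‖Lemma6.Bproc t ω - ω t‖/2)
      have htends : Tendsto (fun p => ω (Lemma6.dpt t p)) atTop (𝓝 (Lemma6.Bproc t ω)) := by
        have := Lemma6.Bproc_tendsto_of_good hg t
        simpa [h0] using this
      have hev : ∀ᶠ p : ℕ in atTop,
          ‖ω (Lemma6.dpt t p) - Lemma6.Bproc t ω‖ < ‖Lemma6.Bproc t ω - ω t‖/2 := by
        have := htends.sub (tendsto_const_nhds (x := Lemma6.Bproc t ω))
        rw [show (Lemma6.Bproc t ω - Lemma6.Bproc t ω) = 0 by abel] at this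
        exact this.norm.eventually (gt_mem_nhds (by simpa using (by positivity :
          (0:ℝ) < ‖Lemma6.Bproc t ω - ω t‖/2)))
      obtain ⟨p₀, hp₀⟩ := hev.exists_forall_of_atTop
      refine Set.mem_iUnion.2 ⟨j, Set.mem_iUnion.2 ⟨p₀, ?_⟩⟩
      refine Set.mem_iInter.2 fun p => Set.mem_iInter.2 fun hp => ?_
      have h1 := hp₀ p hp
      have h2 : ‖Lemma6.Bproc t ω - ω t‖ ≤
          ‖Lemma6.Bproc t ω - ω (Lemma6.dpt t p)‖ + ‖ω (Lemma6.dpt t p) - ω t‖ := by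
        calc ‖Lemma6.Bproc t ω - ω t‖ =
            ‖(Lemma6.Bproc t ω - ω (Lemma6.dpt t p)) + (ω (Lemma6.dpt t p) - ω t)‖ := by
              congr 1; abel
          _ ≤ _ := norm_add_le _ _
      rw [norm_sub_rev] at h1
      have : ‖Lemma6.Bproc t ω - ω t‖/2 ≤ ‖ω (Lemma6.dpt t p) - ω t‖ := by linarith
      simp only [Set.mem_setOf_eq]
      linarith
    refine le_antisymm ?_ zero_le
    calc q T ≤ ∑' j : ℕ, q (⋃ (p₀ : ℕ), ⋂ (p : ℕ) (_ : p₀ ≤ p),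
          {ω : OmegaBar d | 1/((j:ℝ)+1) ≤ ‖ω (Lemma6.dpt t p) - ω t‖}) :=
        (measure_mono hcov).trans (measure_iUnion_le _)
      _ ≤ ∑' j : ℕ, ∑' p₀ : ℕ, q (⋂ (p : ℕ) (_ : p₀ ≤ p),
          {ω : OmegaBar d | 1/((j:ℝ)+1) ≤ ‖ω (Lemma6.dpt t p) - ω t‖}) :=
        ENNReal.tsum_le_tsum (fun j => measure_iUnion_le _)
      _ = 0 := by
        rw [ENNReal.tsum_eq_zero]
        intro j
        rw [ENNReal.tsum_eq_zero]
        intro p₀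
        exact hS (1/((j:ℝ)+1)) (by positivity) p₀
  -- put it together
  have hsub : {ω : OmegaBar d | Lemma6.Bproc t ω ≠ ω t} ⊆
      ((Lemma6.Good : Set (OmegaBar d))ᶜ ∪ {ω : OmegaBar d | ω 0 ≠ 0}) ∪ T := by
    intro ω hω
    by_cases hg : ω ∈ Lemma6.Good
    · by_cases h0 : ω 0 = 0
      · exact Or.inr ⟨hg, h0, hω⟩
      · exact Or.inl (Or.inr h0)
    · exact Or.inl (Or.inl hg)
  refine le_antisymm ?_ zero_le
  calc q {ω : OmegaBar d | Lemma6.Bproc t ω ≠ ω t} ≤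
      q (((Lemma6.Good : Set (OmegaBar d))ᶜ ∪ {ω : OmegaBar d | ω 0 ≠ 0}) ∪ T) :=
      measure_mono hsub
    _ ≤ (q ((Lemma6.Good : Set (OmegaBar d))ᶜ) + q {ω : OmegaBar d | ω 0 ≠ 0}) + q T :=
      le_trans (measure_union_le _ _) (add_le_add_left (measure_union_le _ _) _)
    _ = 0 := by rw [hGood, hzero', hT]; simp
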